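/- Let V be an n-dimensional vector space over a field E with basis e₁, …, eₙ, equipped with an exhaustive decreasing filtration (Filⁱ V)_{i∈ℤ} with exactly n jumps h₁ < … < hₙ, each of multiplicity one (i.e. dim(Fil^{h_i} V / Fil^{h_i+1} V) = 1 for all i). For w ∈ S_n and 1 ≤ i ≤ n let V_i^w = span(e_{w(1)}, …, e_{w(i)}), and let j_i(w) be the unique jump of the filtration induced on the line V_i^w / V_{i-1}^w. If (j₁(w), …, jₙ(w)) ≠ (h₁, …, hₙ), then there exists i ∈ {1, …, n−1} such that the sequence (j_k(w∘(i,i+1)))_k is obtained from (j_k(w))_k by swapping the entries in positions i and i+1, and leaving all other entries unchanged. -/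

import Mathlib

/-- hyperplane rearrangement lemma.  Let `V` be an `n`-dimensional
`E`-vector space with basis `e₁,…,eₙ`, equipped with an exhaustive decreasing filtration
`(Filⁱ V)_{i∈ℤ}` having exactly `n` jumps `h₁ < … < hₙ`, each of multiplicity one.
For `w ∈ Sₙ` and `1 ≤ i ≤ n` let `V_i^w = span(e_{w(1)},…,e_{w(i)})` and let `j_i(w)` be the
unique jump of the filtration induced on the line `V_i^w / V_{i-1}^w` (here characterized
by `(Fil^m ∩ V_i^w) + V_{i-1}^w ≠ (Fil^{m+1} ∩ V_i^w) + V_{i-1}^w`).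
If `(j₁(w),…,jₙ(w)) ≠ (h₁,…,hₙ)`, then there is `i ∈ {1,…,n−1}` such that the ordering
attached to `w∘(i,i+1)` is obtained from that of `w` by swapping the entries in positions
`i` and `i+1` and leaving all other entries unchanged. -/
theorem stmt3 {E V : Type*} [Field E] [AddCommGroup V] [Module E V]
    {n : ℕ} (hn : 0 < n) (e : Module.Basis (Fin n) E V)
    (Fil : ℤ → Submodule E V) (hanti : Antitone Fil)
    (htop : ∃ N : ℤ, ∀ m ≤ N, Fil m = ⊤) (hbot : ∃ N : ℤ, ∀ m, N ≤ m → Fil m = ⊥)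
    (h : Fin n → ℤ) (hmono : StrictMono h)
    (hjumps : ∀ m : ℤ, Fil m ≠ Fil (m + 1) ↔ ∃ i : Fin n, m = h i)
    (hmult : ∀ i : Fin n,
      Module.finrank E (↥(Fil (h i)) ⧸ (Fil (h i + 1)).comap (Fil (h i)).subtype) = 1)
    (S : Equiv.Perm (Fin n) → ℕ → Submodule E V)
    (hS : ∀ w i, S w i = Submodule.span E {x | ∃ k : Fin n, (k : ℕ) < i ∧ x = e (w k)})
    (j : Equiv.Perm (Fin n) → Fin n → ℤ)
    (hj : ∀ (w : Equiv.Perm (Fin n)) (i : Fin n),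
      ((Fil (j w i) ⊓ S w ((i : ℕ) + 1)) ⊔ S w (i : ℕ) ≠
        (Fil (j w i + 1) ⊓ S w ((i : ℕ) + 1)) ⊔ S w (i : ℕ)) ∧
      ∀ m : ℤ, ((Fil m ⊓ S w ((i : ℕ) + 1)) ⊔ S w (i : ℕ) ≠
        (Fil (m + 1) ⊓ S w ((i : ℕ) + 1)) ⊔ S w (i : ℕ)) → m = j w i)
    (w : Equiv.Perm (Fin n)) (hne : j w ≠ h) :
    ∃ i i' : Fin n, (i' : ℕ) = (i : ℕ) + 1 ∧
      (∀ k : Fin n, k ≠ i → k ≠ i' → j (w * Equiv.swap i i') k = j w k) ∧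
      j (w * Equiv.swap i i') i = j w i' ∧
      j (w * Equiv.swap i i') i' = j w i := by
  classical
  obtain ⟨n, rfl⟩ : ∃ m, n = m + 1 := ⟨n - 1, (Nat.succ_pred_eq_of_pos hn).symm⟩
  have hFle : ∀ m : ℤ, Fil (m + 1) ≤ Fil m := fun m => hanti (by linarith)
  have hFle' : ∀ m m' : ℤ, m ≤ m' → Fil m' ≤ Fil m := fun m m' hm => hanti hm
  have hSle : ∀ (w' : Equiv.Perm (Fin (n+1))) (p q : ℕ), p ≤ q → S w' p ≤ S w' q := by
    intro w' p q hpq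
    rw [hS, hS]
    apply Submodule.span_mono
    rintro x ⟨k, hk, rfl⟩
    exact ⟨k, lt_of_lt_of_le hk hpq, rfl⟩
  -- witness extraction
  have wit : ∀ (w' : Equiv.Perm (Fin (n+1))) (k : Fin (n+1)),
      ∃ u, u ∈ Fil (j w' k) ∧ u ∈ S w' ((k : ℕ) + 1) ∧
        u ∉ (Fil (j w' k + 1) ⊓ S w' ((k : ℕ) + 1)) ⊔ S w' (k : ℕ) := by
    intro w' k
    have hne' := (hj w' k).1
    have hle : (Fil (j w' k + 1) ⊓ S w' ((k : ℕ) + 1)) ⊔ S w' (k : ℕ) ≤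
        (Fil (j w' k) ⊓ S w' ((k : ℕ) + 1)) ⊔ S w' (k : ℕ) :=
      sup_le_sup_right (inf_le_inf_right _ (hFle _)) _
    obtain ⟨u, hu1, hu2⟩ := SetLike.exists_of_lt (lt_of_le_of_ne hle (Ne.symm hne'))
    obtain ⟨a, ha, b, hb, rfl⟩ := Submodule.mem_sup.mp hu1
    exact ⟨a, ha.1, ha.2, fun hmem => hu2 (Submodule.add_mem _ hmem (Submodule.mem_sup_right hb))⟩
  -- each j w' k is a jump value
  have hval : ∀ (w' : Equiv.Perm (Fin (n+1))) (k : Fin (n+1)), Fil (j w' k) ≠ Fil (j w' k + 1) := by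
    intro w' k heq
    exact (hj w' k).1 (by rw [heq])
  -- distinctness of the j-values
  haveI : Module.Finite E V := Module.Finite.of_basis e
  have hdist : ∀ k l : Fin (n+1), k < l → j w k ≠ j w l := by
    intro k l hkl heq
    obtain ⟨u, huF, huS, huN⟩ := wit w k
    obtain ⟨v, hvF, hvS, hvN⟩ := wit w l
    rw [← heq] at hvF hvN
    have huF' : u ∉ Fil (j w k + 1) := fun hh => huN (Submodule.mem_sup_left ⟨hh, huS⟩)
    obtain ⟨i0, hi0⟩ := (hjumps (j w k)).mp (hval w k)
    rw [hi0] at huF hvF hvN huF'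
    have huF2 : u ∈ Fil (h i0) := huF
    have hvF2 : v ∈ Fil (h i0) := hvF
    set F' := (Fil (h i0 + 1)).comap (Fil (h i0)).subtype with hF'
    have hub : F'.mkQ ⟨u, huF2⟩ ≠ 0 := by
      rw [Submodule.mkQ_apply, Ne, Submodule.Quotient.mk_eq_zero]
      intro hh
      exact huF' hh
    have hsp : Submodule.span E {F'.mkQ ⟨u, huF2⟩} = ⊤ := by
      apply Submodule.eq_top_of_finrank_eq
      rw [finrank_span_singleton hub, hmult i0]
    obtain ⟨c, hc⟩ := Submodule.mem_span_singleton.mp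
      (hsp ▸ Submodule.mem_top (x := F'.mkQ ⟨v, hvF2⟩))
    have h0 : F'.mkQ (c • (⟨u, huF2⟩ : Fil (h i0)) - ⟨v, hvF2⟩) = 0 := by
      rw [map_sub, map_smul, hc, sub_self]
    rw [Submodule.mkQ_apply, Submodule.Quotient.mk_eq_zero] at h0
    have hcm : c • u - v ∈ Fil (h i0 + 1) := h0
    apply hvN
    have hv' : v = (v - c • u) + c • u := by abel
    rw [hv']
    refine Submodule.add_mem _ (Submodule.mem_sup_left ⟨?_, ?_⟩) (Submodule.mem_sup_right ?_)
    · simpa using Submodule.neg_mem _ hcm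
    · exact Submodule.sub_mem _ hvS
        (hSle w ((k : ℕ) + 1) ((l : ℕ) + 1) (by omega) (Submodule.smul_mem _ _ huS))
    · exact hSle w ((k : ℕ) + 1) (l : ℕ) hkl (Submodule.smul_mem _ _ huS)
  -- descent existence
  have hdesc : ∃ q : Fin n, j w q.succ < j w q.castSucc := by
    by_contra hct
    push_neg at hct
    have hsm : StrictMono (j w) := by
      refine Fin.strictMono_iff_lt_succ.mpr fun q => ?_
      exact lt_of_le_of_ne (hct q) (hdist q.castSucc q.succ (Fin.castSucc_lt_succ (i := q)))
    -- then j w = h, contradiction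
    have hvals : ∀ k, ∃ i0, j w k = h i0 := fun k => (hjumps _).mp (hval w k)
    choose f hf using hvals
    have hfsm : StrictMono f := fun k l hkl => hmono.lt_iff_lt.mp (by rw [← hf, ← hf]; exact hsm hkl)
    have hfsurj : Function.Surjective f := Finite.surjective_of_injective hfsm.injective
    have hrange : Set.range (j w) = Set.range h := by
      ext m
      constructor
      · rintro ⟨k, rfl⟩; exact ⟨f k, (hf k).symm⟩
      · rintro ⟨i0, rfl⟩
        obtain ⟨k, rfl⟩ := hfsurj i0
        exact ⟨k, hf k⟩
    haveI : WellFoundedLT (Fin (n+1)) := inferInstance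
    exact hne ((StrictMono.range_inj hsm hmono).mp hrange)
  obtain ⟨q, hq⟩ := hdesc
  set p : ℕ := (q : ℕ) with hpdef
  have hp1 : p + 1 < n + 1 := Nat.succ_lt_succ q.isLt
  set i : Fin (n+1) := ⟨p, by omega⟩ with hidef
  set i' : Fin (n+1) := ⟨p+1, hp1⟩ with hi'def
  have hieq : q.castSucc = i := Fin.ext (by simp [hidef, hpdef])
  have hi'eq : q.succ = i' := Fin.ext (by simp [hi'def, hpdef])
  rw [hieq, hi'eq] at hq
  have hii' : i ≠ i' := Fin.ne_of_val_ne (by show p ≠ p + 1; omega)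
  set σ : Equiv.Perm (Fin (n+1)) := w * Equiv.swap i i' with hσ
  -- the spaces don't move except at level p+1
  have hSσ : ∀ m : ℕ, m ≠ p + 1 → S σ m = S w m := by
    intro m hm
    rw [hS, hS]
    congr 1
    have key : ∀ k : Fin (n+1), (k : ℕ) < m → ((Equiv.swap i i' k : Fin (n+1)) : ℕ) < m := by
      intro k hk
      rcases Nat.lt_or_ge m (p+1) with hmp | hmp
      · have h1 : k ≠ i := fun hh => by rw [hh] at hk; simp [hidef] at hk; omega
        have h2 : k ≠ i' := fun hh => by rw [hh] at hk; simp [hi'def] at hk; omega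
        rw [Equiv.swap_apply_of_ne_of_ne h1 h2]; exact hk
      · have hmp2 : p + 2 ≤ m := by omega
        rcases eq_or_ne k i with rfl | h1
        · rw [Equiv.swap_apply_left]; show p + 1 < m; omega
        rcases eq_or_ne k i' with rfl | h2
        · rw [Equiv.swap_apply_right]; show p < m; omega
        · rw [Equiv.swap_apply_of_ne_of_ne h1 h2]; exact hk
    ext z
    simp only [Set.mem_setOf_eq]
    constructor
    · rintro ⟨k, hk, rfl⟩
      refine ⟨Equiv.swap i i' k, key k hk, ?_⟩
      rw [hσ]
      simp [Equiv.Perm.mul_apply, Equiv.swap_apply_self]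
    · rintro ⟨k, hk, rfl⟩
      refine ⟨Equiv.swap i i' k, key k hk, ?_⟩
      rw [hσ]
      simp [Equiv.Perm.mul_apply, Equiv.swap_apply_self]
  -- decompositions of the spaces
  have hU1 : S w (p+1) = S w p ⊔ Submodule.span E {e (w i)} := by
    rw [hS, hS, ← Submodule.span_union]
    congr 1
    ext z
    simp only [Set.mem_union, Set.mem_setOf_eq, Set.mem_singleton_iff]
    constructor
    · rintro ⟨k, hk, rfl⟩
      rcases eq_or_ne k i with rfl | hki
      · exact Or.inr rfl
      · exact Or.inl ⟨k, by
          have : (k : ℕ) ≠ p := fun hh => hki (Fin.ext (by simp [hidef, hh]))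
          omega, rfl⟩
    · rintro (⟨k, hk, rfl⟩ | rfl)
      · exact ⟨k, by omega, rfl⟩
      · exact ⟨i, by show p < p + 1; omega, rfl⟩
  have hU2 : S w (p+2) = S w (p+1) ⊔ Submodule.span E {e (w i')} := by
    rw [hS, hS, ← Submodule.span_union]
    congr 1
    ext z
    simp only [Set.mem_union, Set.mem_setOf_eq, Set.mem_singleton_iff]
    constructor
    · rintro ⟨k, hk, rfl⟩
      rcases eq_or_ne k i' with rfl | hki
      · exact Or.inr rfl
      · exact Or.inl ⟨k, by
          have : (k : ℕ) ≠ p + 1 := fun hh => hki (Fin.ext (by simp [hi'def, hh]))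
          omega, rfl⟩
    · rintro (⟨k, hk, rfl⟩ | rfl)
      · exact ⟨k, by omega, rfl⟩
      · exact ⟨i', by show p + 1 < p + 2; omega, rfl⟩
  have hU' : S σ (p+1) = S w p ⊔ Submodule.span E {e (w i')} := by
    rw [hS, hS, ← Submodule.span_union]
    congr 1
    ext z
    simp only [Set.mem_union, Set.mem_setOf_eq, Set.mem_singleton_iff]
    constructor
    · rintro ⟨k, hk, rfl⟩
      rcases eq_or_ne k i with rfl | hki
      · refine Or.inr ?_
        rw [hσ]
        simp [Equiv.Perm.mul_apply, Equiv.swap_apply_left]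
      · have hkp : (k : ℕ) ≠ p := fun hh => hki (Fin.ext (by simp [hidef, hh]))
        have hki' : k ≠ i' := fun hh => by rw [hh] at hk; simp [hi'def] at hk
        refine Or.inl ⟨k, by omega, ?_⟩
        rw [hσ]
        simp [Equiv.Perm.mul_apply, Equiv.swap_apply_of_ne_of_ne hki hki']
    · rintro (⟨k, hk, rfl⟩ | rfl)
      · have hki : k ≠ i := fun hh => by rw [hh] at hk; simp [hidef] at hk
        have hki' : k ≠ i' := fun hh => by rw [hh] at hk; simp [hi'def] at hk
        refine ⟨k, by omega, ?_⟩
        rw [hσ]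
        simp [Equiv.Perm.mul_apply, Equiv.swap_apply_of_ne_of_ne hki hki']
      · refine ⟨i, by show p < p + 1; omega, ?_⟩
        rw [hσ]
        simp [Equiv.Perm.mul_apply, Equiv.swap_apply_left]
  have hUp1 : S w p ≤ S w (p+1) := hSle w p (p+1) (by omega)
  have hU12 : S w (p+1) ≤ S w (p+2) := hSle w (p+1) (p+2) (by omega)
  have hU'2 : S σ (p+1) ≤ S w (p+2) := by
    rw [hU', hU2, hU1]
    exact sup_le (le_sup_of_le_left le_sup_left) le_sup_right
  have hUple' : S w p ≤ S σ (p+1) := by rw [hU']; exact le_sup_left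
  have hyU' : e (w i') ∈ S σ (p+1) := by
    rw [hU']; exact Submodule.mem_sup_right (Submodule.mem_span_singleton_self _)
  set a := j w i' with ha
  set b := j w i with hb
  have hab : a < b := hq
  obtain ⟨u, huF, huS, huN⟩ := wit w i
  obtain ⟨v, hvF, hvS, hvN⟩ := wit w i'
  have hiv : (i : ℕ) = p := rfl
  have hi'v : (i' : ℕ) = p + 1 := rfl
  rw [hiv] at huS huN
  rw [hi'v, show p + 1 + 1 = p + 2 from rfl] at hvS hvN
  have hdec : ∀ (A : Submodule E V) (t z : V), z ∈ A ⊔ Submodule.span E {t} →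
      ∃ s, s ∈ A ∧ ∃ c : E, z = s + c • t := by
    intro A t z hz
    obtain ⟨s, hs, z2, hz2, hzeq⟩ := Submodule.mem_sup.mp hz
    obtain ⟨c, hc⟩ := Submodule.mem_span_singleton.mp hz2
    exact ⟨s, hs, c, by rw [← hzeq, hc]⟩
  obtain ⟨s0, hs0, μ, hudec⟩ := hdec _ _ u (hU1 ▸ huS)
  have hμ : μ ≠ 0 := by
    rintro rfl
    rw [zero_smul, add_zero] at hudec
    exact huN (Submodule.mem_sup_right (hudec ▸ hs0))
  set u' := μ⁻¹ • u with hu'def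
  set s' := μ⁻¹ • s0 with hs'def
  have hu'x : u' = s' + e (w i) := by
    rw [hu'def, hs'def, hudec, smul_add, smul_smul, inv_mul_cancel₀ hμ, one_smul]
  have hu'F : u' ∈ Fil b := Submodule.smul_mem _ _ huF
  have hu'S : u' ∈ S w (p+1) := Submodule.smul_mem _ _ huS
  have hs'Up : s' ∈ S w p := Submodule.smul_mem _ _ hs0
  have hu'N : u' ∉ (Fil (b+1) ⊓ S w (p+1)) ⊔ S w p := by
    intro hh
    apply huN
    have hmu : u = μ • u' := by rw [hu'def, smul_smul, mul_inv_cancel₀ hμ, one_smul]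
    rw [hmu]
    exact Submodule.smul_mem _ _ hh
  obtain ⟨v1, hv1, d, hvdec1⟩ := hdec _ _ v (hU2 ▸ hvS)
  obtain ⟨t, ht, c, hvdec2⟩ := hdec _ _ v1 (hU1 ▸ hv1)
  have hd : d ≠ 0 := by
    rintro rfl
    rw [zero_smul, add_zero] at hvdec1
    exact hvN (Submodule.mem_sup_right (hvdec1 ▸ hv1))
  have hvdec : v = t + c • e (w i) + d • e (w i') := by rw [hvdec1, hvdec2]
  have hFba1 : Fil b ≤ Fil (a+1) := hFle' (a+1) b (by omega)
  have hFb1a1 : Fil (b+1) ≤ Fil (a+1) := hFle' (a+1) (b+1) (by omega)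
  have hFba : Fil b ≤ Fil a := hFle' a b (by omega)
  have hSσp : S σ p = S w p := hSσ p (by omega)
  have hSσp2 : S σ (p+2) = S w (p+2) := hSσ (p+2) (by omega)
  -- Claim A : j σ i = a
  set z := v - c • u' with hzdef
  have hz1 : z ∈ Fil a := Submodule.sub_mem _ hvF (hFba (Submodule.smul_mem _ _ hu'F))
  have hzeq : z = (t - c • s') + d • e (w i') := by
    rw [hzdef, hvdec, hu'x]; module
  have hz2 : z ∈ S σ (p+1) := by
    rw [hzeq]
    exact Submodule.add_mem _
      (hUple' (Submodule.sub_mem _ ht (Submodule.smul_mem _ _ hs'Up)))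
      (Submodule.smul_mem _ _ hyU')
  have hzN : z ∉ (Fil (a+1) ⊓ S σ (p+1)) ⊔ S w p := by
    intro hh
    obtain ⟨f, hf, r, hr, hfr⟩ := Submodule.mem_sup.mp hh
    apply hvN
    have hveq : v = f + (r + c • u') := by
      have e1 : f + r = v - c • u' := hzdef ▸ hfr
      rw [eq_sub_iff_add_eq] at e1
      rw [← e1]; abel
    rw [hveq]
    exact Submodule.add_mem _ (Submodule.mem_sup_left ⟨hf.1, hU'2 hf.2⟩)
      (Submodule.mem_sup_right (Submodule.add_mem _ (hUp1 hr) (Submodule.smul_mem _ _ hu'S)))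
  have hCA : (Fil a ⊓ S σ (p+1)) ⊔ S σ p ≠ (Fil (a+1) ⊓ S σ (p+1)) ⊔ S σ p := by
    rw [hSσp]
    intro hEq
    exact hzN (hEq ▸ Submodule.mem_sup_left ⟨hz1, hz2⟩)
  have hjσi : j σ i = a := ((hj σ i).2 a hCA).symm
  -- Claim B : j σ i' = b
  have hCB : (Fil b ⊓ S σ (p+2)) ⊔ S σ (p+1) ≠ (Fil (b+1) ⊓ S σ (p+2)) ⊔ S σ (p+1) := by
    rw [hSσp2]
    intro hEq
    have hu'mem : u' ∈ (Fil b ⊓ S w (p+2)) ⊔ S σ (p+1) :=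
      Submodule.mem_sup_left ⟨hu'F, hU12 hu'S⟩
    rw [hEq] at hu'mem
    obtain ⟨f, hf, z', hz', hfz⟩ := Submodule.mem_sup.mp hu'mem
    obtain ⟨r, hr, lam, hz'dec⟩ := hdec _ _ z' (hU' ▸ hz')
    rcases eq_or_ne lam 0 with rfl | hlam
    · rw [zero_smul, add_zero] at hz'dec
      rw [hz'dec] at hfz
      apply hu'N
      have hfU1 : f ∈ S w (p+1) := by
        have hfe : f = u' - r := by rw [← hfz]; abel
        rw [hfe]
        exact Submodule.sub_mem _ hu'S (hUp1 hr)
      rw [← hfz]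
      exact Submodule.add_mem _ (Submodule.mem_sup_left ⟨hf.1, hfU1⟩) (Submodule.mem_sup_right hr)
    · apply hvN
      have h1 : f + (r + lam • e (w i')) = u' := by rw [← hz'dec]; exact hfz
      have h2 : lam • e (w i') = u' - f - r := by rw [← h1]; abel
      have hymul : e (w i') = lam⁻¹ • u' - lam⁻¹ • f - lam⁻¹ • r := by
        have h3 : e (w i') = lam⁻¹ • (lam • e (w i')) := by
          rw [smul_smul, inv_mul_cancel₀ hlam, one_smul]
        rw [h3, h2, smul_sub, smul_sub]
      have hveq : v = ((c + d * lam⁻¹) • u' - (d * lam⁻¹) • f)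
          + (t - c • s' - (d * lam⁻¹) • r) := by
        have hxeq : e (w i) = u' - s' := by rw [hu'x]; abel
        rw [hvdec, hxeq, hymul]; module
      rw [hveq]
      refine Submodule.add_mem _ (Submodule.mem_sup_left ⟨?_, ?_⟩) (Submodule.mem_sup_right ?_)
      · exact Submodule.sub_mem _ (Submodule.smul_mem _ _ (hFba1 hu'F))
          (Submodule.smul_mem _ _ (hFb1a1 hf.1))
      · exact Submodule.sub_mem _ (Submodule.smul_mem _ _ (hU12 hu'S))
          (Submodule.smul_mem _ _ hf.2)
      · exact Submodule.sub_mem _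
          (Submodule.sub_mem _ (hUp1 ht) (Submodule.smul_mem _ _ (hUp1 hs'Up)))
          (Submodule.smul_mem _ _ (hUp1 hr))
  have hjσi' : j σ i' = b := ((hj σ i').2 b hCB).symm
  refine ⟨i, i', rfl, ?_, hjσi, hjσi'⟩
  intro k hk hk'
  have hkv : (k : ℕ) ≠ p := fun hh => hk (Fin.ext hh)
  have hkv' : (k : ℕ) ≠ p + 1 := fun hh => hk' (Fin.ext hh)
  have h1 := (hj σ k).1
  rw [hSσ (k : ℕ) hkv', hSσ ((k : ℕ) + 1) (by omega)] at h1
  exact (hj w k).2 _ h1
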